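/- In the exploding change-point model (with g ≺ f_0 and f_m ≺ f_{m+1} in MLR order for all m, and continuous log-likelihood ratios x ↦ log(f_m(x)/g(x))), suppose there is I > 0 such that (1/n) Σ_{k=1}^n log( f_{k-1}(X_k) / g(X_k) ) → I almost surely under P_1. Then for every δ > 0, lim_{n→∞} sup_{k ≥ 1} P_1( (1/n) Σ_{i=k}^{k+n} log( f_{i-k}(X_i) / g(X_i) ) ≤ I − δ ) = 0. -/

import Mathlib

open MeasureTheory Filter ProbabilityTheory

/-- A real random variable `X` has probability density `f` (w.r.t. Lebesgue). -/
def HasDensity {Ω : Type*} [MeasurableSpace Ω] (X : Ω → ℝ) (P : Measure Ω)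
    (f : ℝ → ℝ) : Prop :=
  Measure.map X P = volume.withDensity (fun x => ENNReal.ofReal (f x))


/-- Monotone likelihood ratio order for (nonnegative) densities on `ℝ`. -/
def MLRLe (p q : ℝ → ℝ) : Prop := ∀ x y : ℝ, x ≤ y → p y * q x ≤ p x * q y

lemma mlrle_refl (p : ℝ → ℝ) : MLRLe p p := fun x y _ => by ring_nf; exact le_rfl

lemma integrable_of_integral_eq_one' {q : ℝ → ℝ} (h : ∫ x, q x = 1) : Integrable q := by
  by_contra hc
  rw [integral_undef hc] at h
  exact one_ne_zero h.symm

lemma mlrle_trans {p q r : ℝ → ℝ} (hp : ∀ x, 0 ≤ p x) (hq : ∀ x, 0 ≤ q x)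
    (hr : ∀ x, 0 ≤ r x) (hq1 : ∫ x, q x = 1)
    (h1 : MLRLe p q) (h2 : MLRLe q r) : MLRLe p r := by
  intro x y hxy
  rcases lt_or_eq_of_le (hq x) with hqx | hqx
  · rcases lt_or_eq_of_le (hq y) with hqy | hqy
    · -- both positive
      have hA := h1 x y hxy
      have hB := h2 x y hxy
      have := mul_le_mul hA hB (mul_nonneg (hq y) (hr x)) (mul_nonneg (hp x) (hq y))
      have h' : p y * r x * (q x * q y) ≤ p x * r y * (q x * q y) := by nlinarith
      exact le_of_mul_le_mul_right h' (mul_pos hqx hqy)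
    · -- q y = 0, q x > 0
      have hA := h1 x y hxy
      rw [← hqy] at hA
      have hpy : p y = 0 := by nlinarith [hp y]
      rw [hpy, zero_mul]
      exact mul_nonneg (hp x) (hr y)
  · -- q x = 0
    rcases lt_or_eq_of_le (hr x) with hrx | hrx
    · -- r x > 0 : q vanishes on [x, ∞)
      have hqz : ∀ z, x ≤ z → q z = 0 := by
        intro z hz
        have := h2 x z hz
        rw [← hqx, zero_mul] at this
        nlinarith [hq z, hr x]
      have hu : ∃ u, u ≤ x ∧ 0 < q u := by
        by_contra hcon
        push_neg at hcon
        have : ∀ t, q t = 0 := by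
          intro t
          rcases le_total t x with h | h
          · exact le_antisymm (hcon t h) (hq t)
          · exact hqz t h
        have : ∫ x, q x = 0 := by simp [this]
        rw [hq1] at this; exact one_ne_zero this
      obtain ⟨u, hux, hqu⟩ := hu
      have hA := h1 u y (hux.trans hxy)
      rw [hqz y (hxy), mul_zero] at hA
      have hpy : p y = 0 := by nlinarith [hp y]
      rw [hpy, zero_mul]
      exact mul_nonneg (hp x) (hr y)
    · -- r x = 0
      rw [← hrx, mul_zero]
      exact mul_nonneg (hp x) (hr y)


lemma monotone_log_ratio {p q : ℝ → ℝ} (hp : ∀ x, 0 ≤ p x) (hq : ∀ x, 0 ≤ q x)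
    (h : MLRLe p q) (hc : Continuous fun x => Real.log (q x / p x)) :
    Monotone fun x => Real.log (q x / p x) := by
  set L : ℝ → ℝ := fun x => Real.log (q x / p x) with hL
  have hjunk : ∀ t, ¬(0 < p t ∧ 0 < q t) → L t = 0 := by
    intro t ht
    rcases (lt_or_eq_of_le (hp t)) with hpt | hpt
    · have hqt : q t = 0 := by
        rcases (lt_or_eq_of_le (hq t)) with hqt | hqt
        · exact absurd ⟨hpt, hqt⟩ ht
        · exact hqt.symm
      simp [hL, hqt]
    · simp [hL, ← hpt]
  have hmono2 : ∀ x y, x ≤ y → (0 < p x ∧ 0 < q x) → (0 < p y ∧ 0 < q y) → L x ≤ L y := by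
    rintro x y hxy ⟨hpx, hqx⟩ ⟨hpy, hqy⟩
    have hr : q x / p x ≤ q y / p y := by
      rw [div_le_div_iff₀ hpx hpy]
      have := h x y hxy
      nlinarith
    exact Real.log_le_log (div_pos hqx hpx) hr
  intro x y hxy
  by_cases hDx : (0 < p x ∧ 0 < q x) <;> by_cases hDy : (0 < p y ∧ 0 < q y)
  · exact hmono2 x y hxy hDx hDy
  · -- D x, ¬ D y : show L x ≤ 0
    rw [hjunk y hDy]
    set A : Set ℝ := {t | x ≤ t ∧ ¬(0 < p t ∧ 0 < q t)} with hA
    have hyA : y ∈ A := ⟨hxy, hDy⟩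
    have hAne : A.Nonempty := ⟨y, hyA⟩
    have hAbdd : BddBelow A := ⟨x, fun t ht => ht.1⟩
    set s := sInf A with hs
    have hxs : x ≤ s := le_csInf hAne (fun t ht => ht.1)
    have hLs : L s = 0 := by
      by_cases hDs : (0 < p s ∧ 0 < q s)
      · have hscl : s ∈ closure A := csInf_mem_closure hAne hAbdd
        obtain ⟨u, huA, hu⟩ := mem_closure_iff_seq_limit.1 hscl
        have ht : Tendsto (fun k => L (u k)) atTop (nhds (L s)) := (hc.tendsto s).comp hu
        have h0 : (fun k => L (u k)) = fun _ => (0 : ℝ) :=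
          funext fun k => hjunk _ (huA k).2
        rw [h0] at ht
        exact (tendsto_nhds_unique ht tendsto_const_nhds).symm ▸ rfl
      · exact hjunk s hDs
    rcases eq_or_lt_of_le hxs with heq | hlt
    · rw [← heq] at hLs; rw [hLs]
    · -- x < s : all of [x, s) is in D
      have hD : ∀ t, x ≤ t → t < s → (0 < p t ∧ 0 < q t) := by
        intro t hxt hts
        by_contra hDt
        exact absurd (csInf_le hAbdd ⟨hxt, hDt⟩) (not_le.2 hts)
      have hscl : s ∈ closure (Set.Ico x s) := by
        rw [closure_Ico (ne_of_lt hlt)]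
        exact ⟨le_of_lt hlt, le_refl s⟩
      obtain ⟨u, huA, hu⟩ := mem_closure_iff_seq_limit.1 hscl
      have ht : Tendsto (fun k => L (u k)) atTop (nhds (L s)) := (hc.tendsto s).comp hu
      have hle : ∀ k, L x ≤ L (u k) := fun k =>
        hmono2 x (u k) (huA k).1 hDx (hD (u k) (huA k).1 (huA k).2)
      have := ge_of_tendsto ht (Eventually.of_forall hle)
      rw [hLs] at this
      exact this
  · -- ¬ D x, D y : show 0 ≤ L y
    rw [hjunk x hDx]
    set A : Set ℝ := {t | t ≤ y ∧ ¬(0 < p t ∧ 0 < q t)} with hA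
    have hxA : x ∈ A := ⟨hxy, hDx⟩
    have hAne : A.Nonempty := ⟨x, hxA⟩
    have hAbdd : BddAbove A := ⟨y, fun t ht => ht.1⟩
    set s := sSup A with hs
    have hsy : s ≤ y := csSup_le hAne (fun t ht => ht.1)
    have hLs : L s = 0 := by
      by_cases hDs : (0 < p s ∧ 0 < q s)
      · have hscl : s ∈ closure A := csSup_mem_closure hAne hAbdd
        obtain ⟨u, huA, hu⟩ := mem_closure_iff_seq_limit.1 hscl
        have ht : Tendsto (fun k => L (u k)) atTop (nhds (L s)) := (hc.tendsto s).comp hu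
        have h0 : (fun k => L (u k)) = fun _ => (0 : ℝ) :=
          funext fun k => hjunk _ (huA k).2
        rw [h0] at ht
        exact (tendsto_nhds_unique ht tendsto_const_nhds).symm ▸ rfl
      · exact hjunk s hDs
    rcases eq_or_lt_of_le hsy with heq | hlt
    · rw [heq] at hLs; rw [hLs]
    · have hD : ∀ t, s < t → t ≤ y → (0 < p t ∧ 0 < q t) := by
        intro t hst hty
        by_contra hDt
        exact absurd (le_csSup hAbdd ⟨hty, hDt⟩) (not_le.2 hst)
      have hscl : s ∈ closure (Set.Ioc s y) := by
        rw [closure_Ioc (ne_of_lt hlt)]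
        exact ⟨le_refl s, le_of_lt hlt⟩
      obtain ⟨u, huA, hu⟩ := mem_closure_iff_seq_limit.1 hscl
      have ht : Tendsto (fun k => L (u k)) atTop (nhds (L s)) := (hc.tendsto s).comp hu
      have hle : ∀ k, L (u k) ≤ L y := fun k =>
        hmono2 (u k) y (huA k).2 (hD (u k) (huA k).1 (huA k).2) hDy
      have := le_of_tendsto ht (Eventually.of_forall hle)
      rw [hLs] at this
      exact this
  · rw [hjunk x hDx, hjunk y hDy]


lemma withDensity_univ_eq_one {p : ℝ → ℝ} (hp : ∀ x, 0 ≤ p x) (hp1 : ∫ x, p x = 1) :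
    volume.withDensity (fun x => ENNReal.ofReal (p x)) Set.univ = 1 := by
  rw [withDensity_apply _ MeasurableSet.univ, Measure.restrict_univ,
    ← ofReal_integral_eq_lintegral_ofReal (MeasureTheory.integrable_of_integral_eq_one hp1)
      (Eventually.of_forall hp), hp1, ENNReal.ofReal_one]

lemma withDensity_le_of_mlrle {p q : ℝ → ℝ} (hpm : Measurable p) (hqm : Measurable q)
    (hp : ∀ x, 0 ≤ p x) (hq : ∀ x, 0 ≤ q x) (hp1 : ∫ x, p x = 1) (hq1 : ∫ x, q x = 1)
    (h : MLRLe p q) {S : Set ℝ} (hS : MeasurableSet S)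
    (hlow : ∀ x ∈ S, ∀ y, y ∉ S → x ≤ y) :
    volume.withDensity (fun x => ENNReal.ofReal (q x)) S
      ≤ volume.withDensity (fun x => ENNReal.ofReal (p x)) S := by
  set μp := volume.withDensity (fun x => ENNReal.ofReal (p x)) with hμp
  set μq := volume.withDensity (fun x => ENNReal.ofReal (q x)) with hμq
  set a := μp S with ha
  set a' := μp Sᶜ with ha'
  set b := μq S with hb
  set b' := μq Sᶜ with hb'
  have haa' : a + a' = 1 := by
    rw [ha, ha', measure_add_measure_compl hS, hμp, withDensity_univ_eq_one hp hp1]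
  have hbb' : b + b' = 1 := by
    rw [hb, hb', measure_add_measure_compl hS, hμq, withDensity_univ_eq_one hq hq1]
  have hpm' : Measurable fun x => ENNReal.ofReal (p x) := hpm.ennreal_ofReal
  have hqm' : Measurable fun x => ENNReal.ofReal (q x) := hqm.ennreal_ofReal
  have hcore : b * a' ≤ a * b' := by
    have hbrepr : b * a' = ∫⁻ x in S, ENNReal.ofReal (q x) * a' := by
      rw [hb, hμq, withDensity_apply _ hS, lintegral_mul_const _ hqm']
    have harepr : a * b' = ∫⁻ x in S, ENNReal.ofReal (p x) * b' := by
      rw [ha, hμp, withDensity_apply _ hS, lintegral_mul_const _ hpm']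
    rw [hbrepr, harepr]
    refine setLIntegral_mono (hpm'.mul measurable_const) (fun x hx => ?_)
    have h1 : ENNReal.ofReal (q x) * a' = ∫⁻ y in Sᶜ, ENNReal.ofReal (q x) * ENNReal.ofReal (p y) := by
      rw [ha', hμp, withDensity_apply _ hS.compl, lintegral_const_mul _ hpm']
    have h2 : ENNReal.ofReal (p x) * b' = ∫⁻ y in Sᶜ, ENNReal.ofReal (p x) * ENNReal.ofReal (q y) := by
      rw [hb', hμq, withDensity_apply _ hS.compl, lintegral_const_mul _ hqm']
    rw [h1, h2]
    refine setLIntegral_mono (measurable_const.mul hqm') (fun y hy => ?_)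
    rw [← ENNReal.ofReal_mul (hq x), ← ENNReal.ofReal_mul (hp x)]
    apply ENNReal.ofReal_le_ofReal
    have := h x y (hlow x hx y hy)
    nlinarith
  calc b = b * (a + a') := by rw [haa', mul_one]
    _ = b * a + b * a' := by rw [mul_add]
    _ ≤ b * a + a * b' := add_le_add le_rfl hcore
    _ = a * (b + b') := by ring
    _ = a := by rw [hbb', mul_one]
/-- The half-plane `{(u,v) | u + v ≤ c}` is measurable. -/
lemma measurableSet_halfplane (c : ℝ) : MeasurableSet {z : ℝ × ℝ | z.1 + z.2 ≤ c} :=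
  measurableSet_le (measurable_fst.add measurable_snd) measurable_const

lemma prod_halfplane_fst (μ ν : Measure ℝ) [SFinite μ] [SFinite ν] (c : ℝ) :
    (μ.prod ν) {z : ℝ × ℝ | z.1 + z.2 ≤ c} = ∫⁻ u, ν (Set.Iic (c - u)) ∂μ := by
  rw [Measure.prod_apply (measurableSet_halfplane c)]
  congr 1
  funext u
  congr 1
  ext v
  simp [le_sub_iff_add_le']

lemma prod_halfplane_snd (μ ν : Measure ℝ) [SFinite μ] [SFinite ν] (c : ℝ) :
    (μ.prod ν) {z : ℝ × ℝ | z.1 + z.2 ≤ c} = ∫⁻ v, μ (Set.Iic (c - v)) ∂ν := by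
  rw [Measure.prod_apply_symm (measurableSet_halfplane c)]
  congr 1
  funext v
  congr 1
  ext u
  simp [le_sub_iff_add_le]

theorem sum_llr_prob_le
    {Ω : Type*} [MeasurableSpace Ω] (P : Measure Ω) [IsProbabilityMeasure P]
    (X : ℕ → Ω → ℝ) (f : ℕ → ℝ → ℝ) (g : ℝ → ℝ)
    (hX_meas : ∀ j, Measurable (X j))
    (hf_meas : ∀ m, Measurable (f m)) (hg_meas : Measurable g)
    (hf_nonneg : ∀ m x, 0 ≤ f m x) (hg_nonneg : ∀ x, 0 ≤ g x)
    (hf_int : ∀ m, ∫ x, f m x = 1) (hg_int : ∫ x, g x = 1)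
    (hMLR0 : MLRLe g (f 0))
    (hMLR : ∀ m : ℕ, MLRLe (f m) (f (m + 1)))
    (hcont : ∀ m : ℕ, Continuous fun x => Real.log (f m x / g x))
    (hindep : iIndepFun X P)
    (hdens : ∀ j : ℕ, HasDensity (X j) P (f j)) :
    ∀ (n κ : ℕ) (c : ℝ),
      P {ω | ∑ j ∈ Finset.range n, Real.log (f j (X (κ + j) ω) / g (X (κ + j) ω)) ≤ c}
        ≤ P {ω | ∑ j ∈ Finset.range n, Real.log (f j (X j ω) / g (X j ω)) ≤ c} := by

  classical
  set L : ℕ → ℝ → ℝ := fun m x => Real.log (f m x / g x) with hLdef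
  have hLmeas : ∀ m, Measurable (L m) := fun m => (hcont m).measurable
  have hMLRf : ∀ m k : ℕ, MLRLe (f m) (f (m + k)) := by
    intro m k
    induction k with
    | zero => exact mlrle_refl _
    | succ k ih =>
      have := mlrle_trans (hf_nonneg m) (hf_nonneg (m + k)) (hf_nonneg (m + k + 1))
        (hf_int (m + k)) ih (hMLR (m + k))
      rwa [← Nat.add_assoc]
  have hMLRg : ∀ m : ℕ, MLRLe g (f m) := by
    intro m
    induction m with
    | zero => exact hMLR0
    | succ m ih =>
      exact mlrle_trans hg_nonneg (hf_nonneg m) (hf_nonneg (m + 1)) (hf_int m) ih (hMLR m)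
  have hLmono : ∀ m, Monotone (L m) := fun m =>
    monotone_log_ratio hg_nonneg (hf_nonneg m) (hMLRg m) (hcont m)
  have hdom : ∀ (m m' : ℕ) (t : ℝ), m ≤ m' →
      (Measure.map (X m') P) {x | L m x ≤ t} ≤ (Measure.map (X m) P) {x | L m x ≤ t} := by
    intro m m' t hmm
    have hSm : MeasurableSet {x | L m x ≤ t} := measurableSet_le (hLmeas m) measurable_const
    have hlow : ∀ x ∈ {x | L m x ≤ t}, ∀ y, y ∉ {x | L m x ≤ t} → x ≤ y := by
      intro x hx y hy
      by_contra hxy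
      exact hy (le_trans (hLmono m (le_of_not_ge hxy)) hx)
    obtain ⟨k, rfl⟩ := Nat.exists_eq_add_of_le hmm
    rw [hdens m, hdens (m + k)]
    exact withDensity_le_of_mlrle (hf_meas m) (hf_meas (m + k)) (hf_nonneg m) (hf_nonneg (m + k))
      (hf_int m) (hf_int (m + k)) (hMLRf m k) hSm hlow
  have hSmeas : ∀ (n κ : ℕ), Measurable fun ω => ∑ j ∈ Finset.range n, L j (X (κ + j) ω) :=
    fun n κ => Finset.measurable_sum _ (fun j _ => (hLmeas j).comp (hX_meas (κ + j)))
  have hBmeas : ∀ (n m : ℕ), Measurable fun ω => L n (X m ω) :=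
    fun n m => (hLmeas n).comp (hX_meas m)
  have hpair : ∀ (n κ : ℕ) (c : ℝ),
      P {ω | ∑ j ∈ Finset.range (n + 1), L j (X (κ + j) ω) ≤ c}
        = ((Measure.map (fun ω => ∑ j ∈ Finset.range n, L j (X (κ + j) ω)) P).prod
            (Measure.map (fun ω => L n (X (κ + n) ω)) P)) {z : ℝ × ℝ | z.1 + z.2 ≤ c} := by
    intro n κ c
    set Y : ℕ → Ω → ℝ := fun i ω => L (i - κ) (X i ω) with hY
    have hYindep : iIndepFun Y P :=
      hindep.comp (fun i => L (i - κ)) (fun i => hLmeas _)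
    have hYmeas : ∀ i, Measurable (Y i) := fun i => (hLmeas _).comp (hX_meas i)
    have hnotmem : (κ + n) ∉ Finset.Ico κ (κ + n) := by simp
    have hAB : IndepFun (∑ i ∈ Finset.Ico κ (κ + n), Y i) (Y (κ + n)) P :=
      hYindep.indepFun_finsetSum_of_notMem hYmeas hnotmem
    have hAeq : (∑ i ∈ Finset.Ico κ (κ + n), Y i)
        = fun ω => ∑ j ∈ Finset.range n, L j (X (κ + j) ω) := by
      funext ω
      rw [Finset.sum_apply, Finset.sum_Ico_eq_sum_range]
      simp [hY]
    have hBeq : Y (κ + n) = fun ω => L n (X (κ + n) ω) := by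
      funext ω; simp [hY]
    rw [hAeq, hBeq] at hAB
    have hmap := (indepFun_iff_map_prod_eq_prod_map_map
      (hSmeas n κ).aemeasurable (hBmeas n (κ + n)).aemeasurable).1 hAB
    rw [← hmap, Measure.map_apply ((hSmeas n κ).prodMk (hBmeas n (κ + n)))
      (measurableSet_halfplane c)]
    congr 1
    ext ω
    simp [Finset.sum_range_succ]
  have hMIic : ∀ (n κ : ℕ) (t : ℝ),
      (Measure.map (fun ω => ∑ j ∈ Finset.range n, L j (X (κ + j) ω)) P) (Set.Iic t)
        = P {ω | ∑ j ∈ Finset.range n, L j (X (κ + j) ω) ≤ t} := by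
    intro n κ t
    rw [Measure.map_apply (hSmeas n κ) measurableSet_Iic]
    rfl
  have hNIic : ∀ (n m : ℕ) (t : ℝ),
      (Measure.map (fun ω => L n (X m ω)) P) (Set.Iic t)
        = (Measure.map (X m) P) {x | L n x ≤ t} := by
    intro n m t
    rw [Measure.map_apply (hBmeas n m) measurableSet_Iic,
      Measure.map_apply (hX_meas m) (measurableSet_le (hLmeas n) measurable_const)]
    rfl
  intro n
  induction n with
  | zero => intro κ c; simp
  | succ n ih =>
    intro κ c
    haveI IM1 : IsProbabilityMeasure
        (Measure.map (fun ω => ∑ j ∈ Finset.range n, L j (X (κ + j) ω)) P) :=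
      Measure.isProbabilityMeasure_map (hSmeas n κ).aemeasurable
    haveI IM0 : IsProbabilityMeasure
        (Measure.map (fun ω => ∑ j ∈ Finset.range n, L j (X j ω)) P) :=
      Measure.isProbabilityMeasure_map
        (Finset.measurable_sum _ (fun j _ => (hLmeas j).comp (hX_meas j))).aemeasurable
    haveI IN1 : IsProbabilityMeasure (Measure.map (fun ω => L n (X (κ + n) ω)) P) :=
      Measure.isProbabilityMeasure_map (hBmeas n (κ + n)).aemeasurable
    haveI IN0 : IsProbabilityMeasure (Measure.map (fun ω => L n (X n ω)) P) :=
      Measure.isProbabilityMeasure_map (hBmeas n n).aemeasurable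
    have hM0Iic : ∀ t : ℝ,
        (Measure.map (fun ω => ∑ j ∈ Finset.range n, L j (X j ω)) P) (Set.Iic t)
          = P {ω | ∑ j ∈ Finset.range n, L j (X j ω) ≤ t} := by
      intro t
      have := hMIic n 0 t
      simpa [Nat.zero_add] using this
    have hpair0 : P {ω | ∑ j ∈ Finset.range (n + 1), L j (X j ω) ≤ c}
        = ((Measure.map (fun ω => ∑ j ∈ Finset.range n, L j (X j ω)) P).prod
            (Measure.map (fun ω => L n (X n ω)) P)) {z : ℝ × ℝ | z.1 + z.2 ≤ c} := by
      have := hpair n 0 c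
      simpa [Nat.zero_add] using this
    calc P {ω | ∑ j ∈ Finset.range (n + 1), L j (X (κ + j) ω) ≤ c}
        = ((Measure.map (fun ω => ∑ j ∈ Finset.range n, L j (X (κ + j) ω)) P).prod
            (Measure.map (fun ω => L n (X (κ + n) ω)) P)) {z : ℝ × ℝ | z.1 + z.2 ≤ c} :=
          hpair n κ c
      _ = ∫⁻ v, (Measure.map (fun ω => ∑ j ∈ Finset.range n, L j (X (κ + j) ω)) P)
            (Set.Iic (c - v)) ∂(Measure.map (fun ω => L n (X (κ + n) ω)) P) :=
          prod_halfplane_snd _ _ c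
      _ ≤ ∫⁻ v, (Measure.map (fun ω => ∑ j ∈ Finset.range n, L j (X j ω)) P)
            (Set.Iic (c - v)) ∂(Measure.map (fun ω => L n (X (κ + n) ω)) P) := by
          refine lintegral_mono fun v => ?_
          rw [hMIic n κ (c - v), hM0Iic (c - v)]
          exact ih κ (c - v)
      _ = ((Measure.map (fun ω => ∑ j ∈ Finset.range n, L j (X j ω)) P).prod
            (Measure.map (fun ω => L n (X (κ + n) ω)) P)) {z : ℝ × ℝ | z.1 + z.2 ≤ c} :=
          (prod_halfplane_snd _ _ c).symm
      _ = ∫⁻ u, (Measure.map (fun ω => L n (X (κ + n) ω)) P) (Set.Iic (c - u))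
            ∂(Measure.map (fun ω => ∑ j ∈ Finset.range n, L j (X j ω)) P) :=
          prod_halfplane_fst _ _ c
      _ ≤ ∫⁻ u, (Measure.map (fun ω => L n (X n ω)) P) (Set.Iic (c - u))
            ∂(Measure.map (fun ω => ∑ j ∈ Finset.range n, L j (X j ω)) P) := by
          refine lintegral_mono fun u => ?_
          rw [hNIic n (κ + n) (c - u), hNIic n n (c - u)]
          exact hdom n (κ + n) (c - u) (Nat.le_add_left n κ)
      _ = ((Measure.map (fun ω => ∑ j ∈ Finset.range n, L j (X j ω)) P).prod
            (Measure.map (fun ω => L n (X n ω)) P)) {z : ℝ × ℝ | z.1 + z.2 ≤ c} :=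
          (prod_halfplane_fst _ _ c).symm
      _ = P {ω | ∑ j ∈ Finset.range (n + 1), L j (X j ω) ≤ c} := hpair0.symm

/-- In the exploding change-point model (`g ≺ f 0 ≺ f 1 ≺ ...` in MLR order,
continuous log-likelihood ratios), under `P_1` (here `X j`, the observation at time
`j + 1`, has density `f j`, and the observations are independent), if
`(1/n) Σ_{k=1}^n log(f_{k-1}(X_k)/g(X_k)) → I > 0` almost surely, then for every
`δ > 0`, `sup_{k ≥ 1} P_1((1/n) Σ_{i=k}^{k+n} log(f_{i-k}(X_i)/g(X_i)) ≤ I - δ) → 0`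
as `n → ∞` (below `κ = k - 1`). -/
theorem sup_prob_llr_average_le_tendsto_zero
    {Ω : Type*} [MeasurableSpace Ω] (P : Measure Ω) [IsProbabilityMeasure P]
    (X : ℕ → Ω → ℝ) (f : ℕ → ℝ → ℝ) (g : ℝ → ℝ) (I : ℝ)
    (hX_meas : ∀ j, Measurable (X j))
    (hf_meas : ∀ m, Measurable (f m)) (hg_meas : Measurable g)
    (hf_nonneg : ∀ m x, 0 ≤ f m x) (hg_nonneg : ∀ x, 0 ≤ g x)
    (hf_int : ∀ m, ∫ x, f m x = 1) (hg_int : ∫ x, g x = 1)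
    (hMLR0 : ∀ x y : ℝ, x ≤ y → g y * f 0 x ≤ g x * f 0 y)
    (hMLR : ∀ (m : ℕ) (x y : ℝ), x ≤ y → f m y * f (m + 1) x ≤ f m x * f (m + 1) y)
    (hcont : ∀ m : ℕ, Continuous fun x => Real.log (f m x / g x))
    (hindep : iIndepFun X P)
    (hdens : ∀ j : ℕ, HasDensity (X j) P (f j))
    (hI : 0 < I)
    (hllr : ∀ᵐ ω ∂P,
      Tendsto (fun n : ℕ =>
          (∑ j ∈ Finset.range n, Real.log (f j (X j ω) / g (X j ω))) / n)
        atTop (nhds I)) :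
    ∀ δ : ℝ, 0 < δ →
      Tendsto (fun n : ℕ =>
          ⨆ κ : ℕ,
            P {ω | (∑ j ∈ Finset.range (n + 1),
                Real.log (f j (X (κ + j) ω) / g (X (κ + j) ω))) / n ≤ I - δ})
        atTop (nhds 0) := by
  intro δ hδ
  have key := sum_llr_prob_le P X f g hX_meas hf_meas hg_meas hf_nonneg hg_nonneg
    hf_int hg_int hMLR0 hMLR hcont hindep hdens
  set L : ℕ → ℝ → ℝ := fun m x => Real.log (f m x / g x) with hLdef
  have hLmeas : ∀ m, Measurable (L m) := fun m => (hcont m).measurable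
  -- the dominating sequence
  set q : ℕ → ENNReal := fun n =>
    P {ω | ∑ j ∈ Finset.range (n + 1), L j (X j ω) ≤ (I - δ) * n} with hq
  -- measurability of the events
  have hS0meas : ∀ n : ℕ, Measurable fun ω => ∑ j ∈ Finset.range n, L j (X j ω) :=
    fun n => Finset.measurable_sum _ (fun j _ => (hLmeas j).comp (hX_meas j))
  have hAmeas : ∀ n : ℕ, MeasurableSet
      {ω | ∑ j ∈ Finset.range (n + 1), L j (X j ω) ≤ (I - δ) * n} :=
    fun n => measurableSet_le (hS0meas (n + 1)) measurable_const
  -- q tends to 0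
  have hq0 : Tendsto q atTop (nhds 0) := by
    have hrepr : ∀ n : ℕ, q n = ∫⁻ ω,
        Set.indicator {ω | ∑ j ∈ Finset.range (n + 1), L j (X j ω) ≤ (I - δ) * n}
          (fun _ => (1 : ENNReal)) ω ∂P := by
      intro n
      rw [lintegral_indicator (hAmeas n), setLIntegral_one]
    have haetend : ∀ᵐ ω ∂P, Tendsto (fun n : ℕ => Set.indicator
        {ω | ∑ j ∈ Finset.range (n + 1), L j (X j ω) ≤ (I - δ) * n}
        (fun _ => (1 : ENNReal)) ω) atTop (nhds 0) := by
      filter_upwards [hllr] with ω hω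
      have h1 : Tendsto (fun n : ℕ =>
          (∑ j ∈ Finset.range (n + 1), L j (X j ω)) / ((n : ℝ) + 1))
          atTop (nhds I) := by
        have h1' := hω.comp (tendsto_add_atTop_nat 1)
        refine h1'.congr fun n => ?_
        simp only [Function.comp_apply]
        push_cast
        rfl
      have h2 : Tendsto (fun n : ℕ => ((n : ℝ) + 1) / n) atTop (nhds 1) := by
        have h3 : Tendsto (fun n : ℕ => 1 + 1 / (n : ℝ)) atTop (nhds (1 + 0)) :=
          tendsto_const_nhds.add (tendsto_one_div_atTop_nhds_zero_nat)
        rw [add_zero] at h3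
        refine h3.congr' ?_
        filter_upwards [eventually_ge_atTop 1] with n hn
        have hn' : (n : ℝ) ≠ 0 := by positivity
        field_simp
      have h4 : Tendsto (fun n : ℕ =>
          (∑ j ∈ Finset.range (n + 1), L j (X j ω)) / n) atTop (nhds I) := by
        have h5 := h1.mul h2
        rw [mul_one] at h5
        refine h5.congr' ?_
        filter_upwards [eventually_ge_atTop 1] with n hn
        have hn' : (n : ℝ) ≠ 0 := by positivity
        have hn1 : (n : ℝ) + 1 ≠ 0 := by positivity
        field_simp
      have h6 : ∀ᶠ n : ℕ in atTop, I - δ <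
          (∑ j ∈ Finset.range (n + 1), L j (X j ω)) / n :=
        h4.eventually (eventually_gt_nhds (by linarith))
      refine Tendsto.congr' ?_ tendsto_const_nhds
      filter_upwards [h6, eventually_ge_atTop 1] with n hn hn1
      have hnpos : (0 : ℝ) < n := by exact_mod_cast hn1
      have hnot : ¬ (∑ j ∈ Finset.range (n + 1), L j (X j ω) ≤ (I - δ) * n) := by
        rw [not_le]
        calc (I - δ) * n < (∑ j ∈ Finset.range (n + 1), L j (X j ω)) / n * n :=
              mul_lt_mul_of_pos_right hn hnpos
          _ = ∑ j ∈ Finset.range (n + 1), L j (X j ω) := by field_simp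
      have hnot' : ω ∉ {ω | ∑ j ∈ Finset.range (n + 1), L j (X j ω) ≤ (I - δ) * n} := hnot
      exact (Set.indicator_of_notMem hnot' (fun _ => (1 : ENNReal))).symm
    have hdct := tendsto_lintegral_of_dominated_convergence (μ := P)
      (F := fun n ω => Set.indicator
        {ω | ∑ j ∈ Finset.range (n + 1), L j (X j ω) ≤ (I - δ) * n}
        (fun _ => (1 : ENNReal)) ω)
      (f := fun _ => (0 : ENNReal)) (bound := fun _ => (1 : ENNReal))
      (fun n => (measurable_const.indicator (hAmeas n)))
      (fun n => Eventually.of_forall fun ω => Set.indicator_le_self _ _ ω)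
      (by simp) haetend
    simp only [lintegral_zero] at hdct
    exact Tendsto.congr (fun n => (hrepr n).symm) hdct
  -- squeeze
  refine tendsto_of_tendsto_of_tendsto_of_le_of_le' tendsto_const_nhds hq0
    (Eventually.of_forall fun n => zero_le) ?_
  filter_upwards [eventually_ge_atTop 1] with n hn
  refine iSup_le fun κ => ?_
  have hnpos : (0 : ℝ) < n := by exact_mod_cast hn
  have hset : {ω | (∑ j ∈ Finset.range (n + 1), L j (X (κ + j) ω)) / n ≤ I - δ}
      = {ω | ∑ j ∈ Finset.range (n + 1), L j (X (κ + j) ω) ≤ (I - δ) * n} := by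
    ext ω
    simp only [Set.mem_setOf_eq]
    rw [div_le_iff₀ hnpos]
  calc P {ω | (∑ j ∈ Finset.range (n + 1), L j (X (κ + j) ω)) / n ≤ I - δ}
      = P {ω | ∑ j ∈ Finset.range (n + 1), L j (X (κ + j) ω) ≤ (I - δ) * n} := by rw [hset]
    _ ≤ q n := key (n + 1) κ ((I - δ) * n)
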